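/- Let V be a finite type and f : Finset V → ℝ a normalized, monotone non-decreasing, submodular set function. Let k be a positive integer, S* ⊆ V with |S*| ≤ k, and S₀, B, T ⊆ V finite sets with S₀ ⊆ T and B \ T nonempty. Let kₙ = |(S* \ S₀) \ B| and let τ⁻ ≥ 0 satisfy f(S₀ ∪ {v}) − f(S₀) ≤ τ⁻ for every v ∈ (S* \ S₀) \ B. If v* ∈ B \ T satisfies f(T ∪ {v}) ≤ f(T ∪ {v*}) for all v ∈ B \ T, then f(S*) ≤ f(T) + kₙ·τ⁻ + (k − kₙ)·(f(T ∪ {v*}) − f(T)). -/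

import Mathlib

open Real Finset

/-- Submodular functions satisfy `f (T ∪ A) ≤ f T + ∑_{v ∈ A \ T} (f (T ∪ {v}) - f T)`. -/
lemma submodular_union_bound {V : Type*} [DecidableEq V]
    (f : Finset V → ℝ)
    (hsub : ∀ (A B : Finset V) (v : V), A ⊆ B → v ∉ B →
      f (B ∪ {v}) - f B ≤ f (A ∪ {v}) - f A)
    (T : Finset V) :
    ∀ A : Finset V, f (T ∪ A) ≤ f T + ∑ v ∈ A \ T, (f (T ∪ {v}) - f T) := by
  intro A
  induction A using Finset.induction_on with
  | empty => simp
  | insert a A ha ih =>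
    by_cases haT : a ∈ T
    · have h1 : T ∪ insert a A = T ∪ A := by
        ext x; simp only [Finset.mem_union, Finset.mem_insert]
        constructor
        · rintro (h | rfl | h) <;> simp_all
        · tauto
      have h2 : insert a A \ T = A \ T := by
        ext x; simp only [Finset.mem_sdiff, Finset.mem_insert]
        constructor
        · rintro ⟨rfl | h, hx⟩ <;> simp_all
        · tauto
      rw [h1, h2]; exact ih
    · have haTA : a ∉ T ∪ A := by simp [haT, ha]
      have h1 : T ∪ insert a A = (T ∪ A) ∪ {a} := by
        ext x; simp [Finset.mem_union, Finset.mem_insert]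
      have h2 : insert a A \ T = insert a (A \ T) := by
        ext x; simp only [Finset.mem_sdiff, Finset.mem_insert]
        constructor
        · rintro ⟨rfl | h, hx⟩ <;> simp_all
        · rintro (rfl | ⟨h1, h2⟩) <;> simp_all
      have hsub' := hsub T (T ∪ A) a Finset.subset_union_left haTA
      have haAT : a ∉ A \ T := by simp [ha]
      rw [h1, h2, Finset.sum_insert haAT]
      linarith [ih]

/-- Single-step inequality of the greedy completion phase of the stream clipper:
`f(S*) ≤ f(T) + kₙ τ⁻ + (k − kₙ)(f(T ∪ {v*}) − f(T))` for the greedily chosen `v*`. -/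
theorem stream_clipper_greedy_step {V : Type*} [Fintype V] [DecidableEq V]
    (f : Finset V → ℝ)
    (hnorm : f ∅ = 0)
    (hmono : ∀ A B : Finset V, A ⊆ B → f A ≤ f B)
    (hsub : ∀ (A B : Finset V) (v : V), A ⊆ B → v ∉ B →
      f (B ∪ {v}) - f B ≤ f (A ∪ {v}) - f A)
    (k : ℕ) (hk : 0 < k)
    (Sstar : Finset V) (hSstar : Sstar.card ≤ k)
    (S₀ B T : Finset V) (hS₀T : S₀ ⊆ T) (hBT : (B \ T).Nonempty)
    (kn : ℕ) (hkn : kn = ((Sstar \ S₀) \ B).card)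
    (τm : ℝ) (hτm : 0 ≤ τm)
    (hreject : ∀ v ∈ (Sstar \ S₀) \ B, f (S₀ ∪ {v}) - f S₀ ≤ τm)
    (vstar : V) (hvstar : vstar ∈ B \ T)
    (hmax : ∀ v ∈ B \ T, f (T ∪ {v}) ≤ f (T ∪ {vstar})) :
    f Sstar ≤ f T + kn * τm + ((k : ℝ) - kn) * (f (T ∪ {vstar}) - f T) := by
  set g : ℝ := f (T ∪ {vstar}) - f T with hg
  have hg0 : 0 ≤ g := by
    have := hmono T (T ∪ {vstar}) Finset.subset_union_left
    linarith
  -- decompose Sstar \ T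
  set R : Finset V := (Sstar \ T) \ B with hR
  set O : Finset V := (Sstar \ T) ∩ B with hO
  have hsplit : Sstar \ T = R ∪ O := by
    ext x; simp only [hR, hO, Finset.mem_union, Finset.mem_sdiff, Finset.mem_inter]
    tauto
  have hdisj : Disjoint R O := by
    simp only [Finset.disjoint_left, hR, hO, Finset.mem_sdiff, Finset.mem_inter]
    tauto
  -- main bound from submodularity
  have h1 : f Sstar ≤ f (T ∪ Sstar) := hmono _ _ Finset.subset_union_right
  have h2 := submodular_union_bound f hsub T Sstar
  -- bounds on gains
  have hRbound : ∀ v ∈ R, f (T ∪ {v}) - f T ≤ τm := by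
    intro v hv
    simp only [hR, Finset.mem_sdiff] at hv
    obtain ⟨⟨hvS, hvT⟩, hvB⟩ := hv
    have hvS₀ : v ∉ S₀ := fun h => hvT (hS₀T h)
    have := hsub S₀ T v hS₀T hvT
    have := hreject v (by simp [hvS, hvS₀, hvB])
    linarith
  have hObound : ∀ v ∈ O, f (T ∪ {v}) - f T ≤ g := by
    intro v hv
    simp only [hO, Finset.mem_inter, Finset.mem_sdiff] at hv
    have := hmax v (by simp [hv.1.2, hv.2])
    simp only [hg]; linarith
  -- cardinality bounds
  have hRcard : (R.card : ℝ) ≤ kn := by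
    have : R ⊆ (Sstar \ S₀) \ B := by
      intro x hx
      simp only [hR, Finset.mem_sdiff] at hx ⊢
      exact ⟨⟨hx.1.1, fun h => hx.1.2 (hS₀T h)⟩, hx.2⟩
    rw [hkn]
    exact_mod_cast Finset.card_le_card this
  have hOcard : (O.card : ℝ) ≤ (k : ℝ) - kn := by
    have hsubS : O ∪ ((Sstar \ S₀) \ B) ⊆ Sstar := by
      intro x hx
      simp only [Finset.mem_union, hO, Finset.mem_inter, Finset.mem_sdiff] at hx
      tauto
    have hdisj2 : Disjoint O ((Sstar \ S₀) \ B) := by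
      simp only [Finset.disjoint_left, hO, Finset.mem_inter, Finset.mem_sdiff]
      tauto
    have := Finset.card_le_card hsubS
    rw [Finset.card_union_of_disjoint hdisj2] at this
    have hle : O.card + kn ≤ k := by omega
    have : (O.card : ℝ) + (kn : ℝ) ≤ (k : ℝ) := by exact_mod_cast hle
    linarith
  -- sum over the split
  rw [hsplit] at h2
  rw [Finset.sum_union hdisj] at h2
  have hsum1 : ∑ v ∈ R, (f (T ∪ {v}) - f T) ≤ R.card * τm := by
    calc ∑ v ∈ R, (f (T ∪ {v}) - f T) ≤ ∑ _v ∈ R, τm := Finset.sum_le_sum hRbound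
    _ = R.card * τm := by rw [Finset.sum_const, nsmul_eq_mul]
  have hsum2 : ∑ v ∈ O, (f (T ∪ {v}) - f T) ≤ O.card * g := by
    calc ∑ v ∈ O, (f (T ∪ {v}) - f T) ≤ ∑ _v ∈ O, g := Finset.sum_le_sum hObound
    _ = O.card * g := by rw [Finset.sum_const, nsmul_eq_mul]
  have hfin1 : (R.card : ℝ) * τm ≤ kn * τm := mul_le_mul_of_nonneg_right hRcard hτm
  have hfin2 : (O.card : ℝ) * g ≤ ((k : ℝ) - kn) * g := mul_le_mul_of_nonneg_right hOcard hg0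
  linarith
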